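/- There exists ε > 0, namely ε = 2/√k, such that every connected one-parameter subgroup {exp(tA) : t ∈ ℝ} of GL(k,ℂ), with A a nonzero k × k complex matrix, intersects the sphere {m ∈ GL(k,ℂ) : ‖m − I‖ = ε}, where ‖·‖ is the Frobenius norm; assume here that either {exp(tA)} is unbounded, or A is diagonalizable with all eigenvalues purely imaginary. -/

import Mathlib

/-- The Frobenius (Euclidean) norm of a `k × k` complex matrix. -/
noncomputable def frobeniusNorm {k : ℕ} (C : Matrix (Fin k) (Fin k) ℂ) : ℝ :=
  Real.sqrt (∑ i, ∑ j, ‖C i j‖ ^ 2)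

open NormedSpace in
lemma aux_frob_eq_norm {k : ℕ} (C : Matrix (Fin k) (Fin k) ℂ) :
    frobeniusNorm C =
      letI := Matrix.frobeniusNormedAddCommGroup (m := Fin k) (n := Fin k) (α := ℂ)
      ‖C‖ := by
  letI := Matrix.frobeniusNormedAddCommGroup (m := Fin k) (n := Fin k) (α := ℂ)
  show frobeniusNorm C = ‖C‖
  rw [Matrix.frobenius_norm_def, frobeniusNorm, Real.sqrt_eq_rpow]
  congr 1
  refine Finset.sum_congr rfl fun i _ => Finset.sum_congr rfl fun j _ => ?_
  rw [← Real.rpow_natCast ‖C i j‖ 2]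
  norm_num

lemma aux_frob_nonneg {k : ℕ} (C : Matrix (Fin k) (Fin k) ℂ) : 0 ≤ frobeniusNorm C :=
  Real.sqrt_nonneg _

lemma aux_frob_one {k : ℕ} : frobeniusNorm (1 : Matrix (Fin k) (Fin k) ℂ) = Real.sqrt k := by
  unfold frobeniusNorm
  congr 1
  have h : ∀ i : Fin k, ∑ j, ‖(1 : Matrix (Fin k) (Fin k) ℂ) i j‖ ^ 2 = 1 := by
    intro i
    rw [Finset.sum_eq_single i]
    · simp [Matrix.one_apply]
    · intro b _ hb; simp [Matrix.one_apply, Ne.symm hb]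
    · simp
  simp [h]

lemma aux_frob_sub_ge {k : ℕ} (X Y : Matrix (Fin k) (Fin k) ℂ) :
    frobeniusNorm X - frobeniusNorm Y ≤ frobeniusNorm (X - Y) := by
  letI := Matrix.frobeniusNormedAddCommGroup (m := Fin k) (n := Fin k) (α := ℂ)
  rw [aux_frob_eq_norm, aux_frob_eq_norm, aux_frob_eq_norm]
  exact norm_sub_norm_le X Y

lemma aux_abs_trace_le {k : ℕ} (C : Matrix (Fin k) (Fin k) ℂ) :
    ‖C.trace‖ ≤ Real.sqrt k * frobeniusNorm C := by
  have h1 : ‖C.trace‖ ≤ ∑ i, ‖C i i‖ := by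
    rw [Matrix.trace]
    exact norm_sum_le _ _
  have h2 : (∑ i, ‖C i i‖) ^ 2 ≤ k * ∑ i, ‖C i i‖ ^ 2 := by
    simpa using sq_sum_le_card_mul_sum_sq (s := Finset.univ)
      (f := fun i : Fin k => ‖C i i‖)
  have h3 : ∑ i, ‖C i i‖ ^ 2 ≤ ∑ i, ∑ j, ‖C i j‖ ^ 2 :=
    Finset.sum_le_sum fun i _ =>
      Finset.single_le_sum (f := fun j => ‖C i j‖ ^ 2)
        (fun j _ => sq_nonneg _) (Finset.mem_univ i)
  calc ‖C.trace‖ ≤ ∑ i, ‖C i i‖ := h1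
    _ ≤ Real.sqrt (k * ∑ i, ‖C i i‖ ^ 2) := Real.le_sqrt_of_sq_le h2
    _ ≤ Real.sqrt (k * ∑ i, ∑ j, ‖C i j‖ ^ 2) :=
        Real.sqrt_le_sqrt (mul_le_mul_of_nonneg_left h3 (Nat.cast_nonneg k))
    _ = Real.sqrt k * frobeniusNorm C := by
        rw [frobeniusNorm, Real.sqrt_mul (Nat.cast_nonneg k)]

open NormedSpace in
lemma aux_frob_cont {k : ℕ} (A : Matrix (Fin k) (Fin k) ℂ) :
    Continuous fun t : ℝ => frobeniusNorm (exp (t • A) - 1) := by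
  have hexp : Continuous fun t : ℝ => exp (t • A) := by
    letI := Matrix.frobeniusNormedRing (m := Fin k) (α := ℂ)
    letI := Matrix.frobeniusNormedAlgebra (m := Fin k) (α := ℂ) (R := ℂ)
    letI := Matrix.frobeniusNormedAlgebra (m := Fin k) (α := ℂ) (R := ℚ)
    exact exp_continuous.comp (continuous_id.smul continuous_const)
  unfold frobeniusNorm
  apply Real.continuous_sqrt.comp
  apply continuous_finset_sum
  intro i _
  apply continuous_finset_sum
  intro j _
  have h : Continuous fun t : ℝ => (exp (t • A) - 1) i j :=
    (continuous_apply j).comp ((continuous_apply i).comp (hexp.sub continuous_const))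
  exact (continuous_norm.comp h).pow 2

open NormedSpace in
lemma aux_trace_exp_diag {k : ℕ} (A : Matrix (Fin k) (Fin k) ℂ) (B : Matrix (Fin k) (Fin k) ℂ)
    (hB : IsUnit B) (β : Fin k → ℝ) (t : ℝ)
    (hA : A = B * Matrix.diagonal (fun j => Complex.I * β j) * B⁻¹) :
    (exp (t • A)).trace = ∑ j, Complex.exp (Complex.I * (t * β j)) := by
  have h1 : t • A = B * Matrix.diagonal (fun j => Complex.I * (t * β j)) * B⁻¹ := by
    rw [hA, ← smul_mul_assoc, ← mul_smul_comm, ← Matrix.diagonal_smul]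
    have h2 : (t • fun j => Complex.I * (β j : ℂ)) = fun j => Complex.I * ((t : ℂ) * β j) := by
      funext j
      simp [Complex.real_smul]
      ring
    rw [h2]
  rw [h1, Matrix.exp_conj B _ hB, Matrix.exp_diagonal]
  rw [Matrix.trace_mul_cycle, Matrix.nonsing_inv_mul B ((Matrix.isUnit_iff_isUnit_det B).mp hB),
    one_mul, Matrix.trace_diagonal]
  refine Finset.sum_congr rfl fun j _ => ?_
  rw [Pi.exp_def, ← Complex.exp_eq_exp_ℂ]

/-- There exists `ε > 0`, namely `ε = 2/√k`, such that every one-parameter subgroup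
`{exp(tA) : t ∈ ℝ}` of `GL(k,ℂ)` with `A ≠ 0` which is either unbounded, or has `A`
diagonalizable with purely imaginary eigenvalues, meets the Frobenius sphere
`{m : ‖m − I‖ = ε}`. -/
theorem exists_eps_one_param_subgroup_meets_sphere (k : ℕ) (hk : 0 < k) :
    ∃ ε : ℝ, 0 < ε ∧ ε = 2 / Real.sqrt k ∧
      ∀ A : Matrix (Fin k) (Fin k) ℂ, A ≠ 0 →
        ((∀ R : ℝ, ∃ t : ℝ, R ≤ frobeniusNorm (NormedSpace.exp (t • A))) ∨
          (∃ B : Matrix (Fin k) (Fin k) ℂ, IsUnit B ∧ ∃ β : Fin k → ℝ,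
            A = B * Matrix.diagonal (fun j => Complex.I * β j) * B⁻¹)) →
        ∃ t : ℝ, frobeniusNorm (NormedSpace.exp (t • A) - 1) = ε := by
  have hsqrtk : 0 < Real.sqrt k := Real.sqrt_pos.mpr (by exact_mod_cast hk)
  have hεpos : 0 < 2 / Real.sqrt k := div_pos two_pos hsqrtk
  refine ⟨2 / Real.sqrt k, hεpos, rfl, ?_⟩
  intro A hA hcase
  set f : ℝ → ℝ := fun t => frobeniusNorm (NormedSpace.exp (t • A) - 1) with hf
  have hcont : Continuous f := aux_frob_cont A
  have hf0 : f 0 = 0 := by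
    simp only [hf, zero_smul, NormedSpace.exp_zero, sub_self]
    unfold frobeniusNorm
    simp
  have key : ∃ t₁ : ℝ, 2 / Real.sqrt k ≤ f t₁ := by
    rcases hcase with h | ⟨B, hB, β, hAB⟩
    · obtain ⟨t₁, ht₁⟩ := h (Real.sqrt k + 2 / Real.sqrt k)
      refine ⟨t₁, ?_⟩
      have h2 := aux_frob_sub_ge (NormedSpace.exp (t₁ • A)) 1
      rw [aux_frob_one] at h2
      simp only [hf]
      linarith
    · have hj : ∃ j, β j ≠ 0 := by
        by_contra hcon
        push_neg at hcon
        apply hA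
        rw [hAB]
        have hz : (fun j => Complex.I * (β j : ℂ)) = fun _ => (0 : ℂ) := by
          funext j; rw [hcon j]; simp
        rw [hz]
        simp
      obtain ⟨j₀, hj₀⟩ := hj
      set t₁ := Real.pi / β j₀ with ht₁def
      refine ⟨t₁, ?_⟩
      have htr := aux_trace_exp_diag A B hB β t₁ hAB
      set C : Matrix (Fin k) (Fin k) ℂ := NormedSpace.exp (t₁ • A) - 1 with hC
      have htrC : C.trace = (∑ j, Complex.exp (Complex.I * (t₁ * β j))) - k := by
        rw [hC, Matrix.trace_sub, Matrix.trace_one, htr]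
        simp
      have hre : C.trace.re = (∑ j, Real.cos (t₁ * β j)) - k := by
        rw [htrC]
        simp only [Complex.sub_re, Complex.re_sum, Complex.natCast_re]
        congr 1
        refine Finset.sum_congr rfl fun j _ => ?_
        rw [mul_comm]
        have : ((t₁ : ℂ) * (β j : ℂ)) = ((t₁ * β j : ℝ) : ℂ) := by push_cast; ring
        rw [this, Complex.exp_ofReal_mul_I_re]
      have hcos : ∑ j, Real.cos (t₁ * β j) ≤ (k : ℝ) - 2 := by
        have hterm : ∀ j : Fin k, (0 : ℝ) ≤ 1 - Real.cos (t₁ * β j) := fun j => by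
          nlinarith [Real.cos_le_one (t₁ * β j)]
        have hsingle : 1 - Real.cos (t₁ * β j₀) ≤ ∑ j, (1 - Real.cos (t₁ * β j)) :=
          Finset.single_le_sum (fun j _ => hterm j) (Finset.mem_univ j₀)
        have hpi : t₁ * β j₀ = Real.pi := div_mul_cancel₀ _ hj₀
        rw [hpi, Real.cos_pi] at hsingle
        have hsum : ∑ j, (1 - Real.cos (t₁ * β j))
            = (k : ℝ) - ∑ j, Real.cos (t₁ * β j) := by
          rw [Finset.sum_sub_distrib]
          simp
        rw [hsum] at hsingle
        linarith
      have habs : 2 ≤ ‖C.trace‖ := by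
        have h1 : C.trace.re ≤ -2 := by rw [hre]; linarith
        have h2 : |C.trace.re| ≤ ‖C.trace‖ := Complex.abs_re_le_norm _
        have h3 : 2 ≤ |C.trace.re| := by
          rw [abs_le'] at *
          rcases abs_cases C.trace.re with ⟨he, _⟩ | ⟨he, _⟩ <;> linarith
        linarith
      have hbound := aux_abs_trace_le C
      have h4 : 2 ≤ Real.sqrt k * frobeniusNorm C := le_trans habs hbound
      rw [div_le_iff₀ hsqrtk]
      simp only [hf, ← hC]
      linarith [mul_comm (Real.sqrt k) (frobeniusNorm C)]
  obtain ⟨t₁, ht₁⟩ := key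
  have hmem : (2 / Real.sqrt k) ∈ Set.uIcc (f 0) (f t₁) := by
    rw [hf0]
    exact Set.mem_uIcc.mpr (Or.inl ⟨le_of_lt hεpos, ht₁⟩)
  obtain ⟨t, _, ht⟩ := intermediate_value_uIcc (hcont.continuousOn) hmem
  exact ⟨t, ht⟩
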